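/- (Inexact gradient mapping implies near-optimality) Let 0 < λ ≤ 1/L'_ρ, x̄ ∈ 𝒳, e ∈ 𝕏*, and let x⁺ = argmin_{x∈𝒳} [⟨∇f̄_ρ(x̄) + e, x⟩ + r(x) + μω_𝒳(x) + λ⁻¹D_{ω_𝒳}(x, x̄)]. Define G = (x̄ − x⁺)/λ and Ḡ = (∇ω_𝒳(x̄) − ∇ω_𝒳(x⁺))/λ. Then p_ρ(x⁺) − p_ρ(x*_ρ) ≤ 3(‖Ḡ‖² + ‖G‖² + ‖e‖²)/(2μ); in particular, if ‖Ḡ‖² + ‖G‖² + ‖e‖² ≤ 2με/3 then p_ρ(x⁺) − min_{x∈𝒳} p_ρ(x) ≤ ε. -/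

import Mathlib

open Filter Topology Set

private lemma slope_deriv_le' {ψ : ℝ → ℝ} {d c k : ℝ}
    (hψ : HasDerivAt ψ d 0)
    (h : ∀ t ∈ Set.Ioc (0:ℝ) 1, ψ t - ψ 0 ≤ t * c - t * (1 - t) * k) :
    d ≤ c - k := by
  have hslope : Tendsto (slope ψ 0) (𝓝[>] 0) (𝓝 d) :=
    (hasDerivAt_iff_tendsto_slope.mp hψ).mono_left
      (nhdsWithin_mono _ (fun x hx => ne_of_gt hx))
  have hg : Tendsto (fun t : ℝ => c - (1 - t) * k) (𝓝[>] (0:ℝ)) (𝓝 (c - k)) := by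
    have h1 : Tendsto (fun t : ℝ => c - (1 - t) * k) (𝓝 0) (𝓝 (c - (1 - 0) * k)) := by
      exact tendsto_const_nhds.sub (((tendsto_const_nhds).sub tendsto_id).mul tendsto_const_nhds)
    simpa using h1.mono_left nhdsWithin_le_nhds
  refine le_of_tendsto_of_tendsto hslope hg ?_
  filter_upwards [Ioc_mem_nhdsGT_of_mem (by simp : (0:ℝ) ∈ Ico (0:ℝ) 1)] with t ht
  have ht0 : (0:ℝ) < t := ht.1
  have := h t ht
  have hs : slope ψ 0 t = (ψ t - ψ 0) / t := by simp [slope_def_field]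
  rw [hs]
  rw [div_le_iff₀ ht0]
  nlinarith [this]

private lemma slope_deriv_ge' {ψ : ℝ → ℝ} {d c : ℝ}
    (hψ : HasDerivAt ψ d 0)
    (h : ∀ t ∈ Set.Ioc (0:ℝ) 1, t * c ≤ ψ t - ψ 0) :
    c ≤ d := by
  have := slope_deriv_le' (k := 0) (c := -c) hψ.neg (by
    intro t ht
    have := h t ht
    show -ψ t - -ψ 0 ≤ _
    nlinarith)
  linarith

private lemma line_hasDerivAt2 {X : Type*} [NormedAddCommGroup X] [NormedSpace ℝ X]
    {F : X → ℝ} {DF : X →L[ℝ] ℝ} {x d : X} {t₀ : ℝ}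
    (hF : HasFDerivAt F DF (x + t₀ • d)) :
    HasDerivAt (fun t : ℝ => F (x + t • d)) (DF d) t₀ := by
  have hg : HasDerivAt (fun t : ℝ => x + t • d) d t₀ := by
    simpa using ((hasDerivAt_id t₀).smul_const d).const_add x
  exact hF.comp_hasDerivAt t₀ hg

private lemma descent_lemma {X : Type*} [NormedAddCommGroup X] [NormedSpace ℝ X]
    {U : Set X} {f : X → ℝ} {Df : X → X →L[ℝ] ℝ}
    (hfd : ∀ z ∈ U, HasFDerivAt f (Df z) z)
    {𝒳 : Set X} (h𝒳cv : Convex ℝ 𝒳) (hXU : 𝒳 ⊆ U)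
    {L : ℝ}
    (hfLip : ∀ z ∈ 𝒳, ∀ z' ∈ 𝒳, ‖Df z - Df z'‖ ≤ L * ‖z - z'‖)
    {x y : X} (hx : x ∈ 𝒳) (hy : y ∈ 𝒳) :
    f y ≤ f x + Df x (y - x) + L / 2 * ‖y - x‖ ^ 2 := by
  set d := y - x with hd
  have hmem : ∀ t ∈ Icc (0:ℝ) 1, x + t • d ∈ 𝒳 := by
    intro t ht
    have hxt : x + t • d = (1 - t) • x + t • y := by rw [hd]; module
    rw [hxt]
    exact h𝒳cv hx hy (by linarith [ht.2]) ht.1 (by ring)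
  set φ : ℝ → ℝ := fun t => f (x + t • d) - t * (Df x d) - L / 2 * (t ^ 2 * ‖d‖ ^ 2) with hφ
  have hderiv : ∀ t ∈ Icc (0:ℝ) 1,
      HasDerivAt φ (Df (x + t • d) d - Df x d - L * t * ‖d‖ ^ 2) t := by
    intro t ht
    have h1 := line_hasDerivAt2 (hfd _ (hXU (hmem t ht)))
    have h2 : HasDerivAt (fun t : ℝ => t * (Df x d)) (Df x d) t := by
      simpa using (hasDerivAt_id t).mul_const (Df x d)
    have h3 : HasDerivAt (fun t : ℝ => L / 2 * (t ^ 2 * ‖d‖ ^ 2))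
        (L / 2 * (2 * t * ‖d‖ ^ 2)) t := by
      have := ((hasDerivAt_pow 2 t).mul_const (‖d‖ ^ 2)).const_mul (L / 2)
      simpa using this
    have h4 := (h1.sub h2).sub h3
    exact h4.congr_deriv (by ring)
  have hcont : ContinuousOn φ (Icc 0 1) := fun t ht =>
    ((hderiv t ht).continuousAt).continuousWithinAt
  have hantit : AntitoneOn φ (Icc 0 1) := by
    apply antitoneOn_of_deriv_nonpos (convex_Icc 0 1) hcont
    · intro t ht
      rw [interior_Icc] at ht
      exact ((hderiv t (Ioo_subset_Icc_self ht)).differentiableAt).differentiableWithinAt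
    · intro t ht
      rw [interior_Icc] at ht
      rw [(hderiv t (Ioo_subset_Icc_self ht)).deriv]
      have hb : (Df (x + t • d) - Df x) d ≤ ‖Df (x + t • d) - Df x‖ * ‖d‖ :=
        le_trans (le_abs_self _) ((Df (x + t • d) - Df x).le_opNorm d)
      have hl := hfLip _ (hmem t (Ioo_subset_Icc_self ht)) x hx
      have hn : ‖x + t • d - x‖ = t * ‖d‖ := by
        simp [norm_smul, abs_of_pos ht.1]
      rw [hn] at hl
      simp only [ContinuousLinearMap.sub_apply] at hb
      nlinarith [norm_nonneg d, ht.1.le, norm_nonneg (Df (x + t • d) - Df x)]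
  have hkey := hantit (left_mem_Icc.mpr (by norm_num)) (right_mem_Icc.mpr (by norm_num))
    (by norm_num : (0:ℝ) ≤ 1)
  have hx1 : x + (1:ℝ) • d = y := by rw [hd]; module
  have hx0 : x + (0:ℝ) • d = x := by module
  simp only [hφ, hx1, hx0, one_mul, one_pow, zero_mul, mul_zero, sub_zero, zero_pow] at hkey
  nlinarith [hkey]

set_option maxHeartbeats 1000000 in
/-- Inexact gradient mapping implies near-optimality: for `0 < λ ≤ 1/L'_ρ`, with
`x⁺ = argmin_{x∈𝒳} [⟨∇f̄_ρ(x̄)+e, x⟩ + r(x) + μω_𝒳(x) + λ⁻¹D_{ω_𝒳}(x,x̄)]`,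
`G = (x̄-x⁺)/λ` and `Ḡ = (∇ω_𝒳(x̄)-∇ω_𝒳(x⁺))/λ`, one has
`p_ρ(x⁺) - p_ρ(x*_ρ) ≤ 3(‖Ḡ‖² + ‖G‖² + ‖e‖²)/(2μ)`; in particular, if
`‖Ḡ‖² + ‖G‖² + ‖e‖² ≤ 2με/3` then `p_ρ(x⁺) - min_{𝒳} p_ρ ≤ ε`. -/
theorem inexact_gradient_mapping_suboptimality
    {X : Type*} [NormedAddCommGroup X] [NormedSpace ℝ X] [FiniteDimensional ℝ X]
    (𝒳 : Set X) (h𝒳ne : 𝒳.Nonempty) (h𝒳cl : IsClosed 𝒳) (h𝒳cv : Convex ℝ 𝒳)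
    (r : X → ℝ) (hrcv : ConvexOn ℝ 𝒳 r) (hrlsc : LowerSemicontinuousOn r 𝒳)
    (U : Set X) (hU : IsOpen U) (hXU : 𝒳 ⊆ U)
    (ω : X → ℝ) (Dω : X → X →L[ℝ] ℝ)
    (hωc : ContinuousOn ω 𝒳) (hωsc : StrongConvexOn 𝒳 1 ω)
    (hωd : ∀ z ∈ U, HasFDerivAt ω (Dω z) z)
    (D : X → X → ℝ) (hD : ∀ x' x, D x' x = ω x' - ω x - Dω x (x' - x))
    (μ : ℝ) (hμ : 0 < μ)
    (f : X → ℝ) (Df : X → X →L[ℝ] ℝ)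
    (hfcv : ConvexOn ℝ 𝒳 f)
    (hfd : ∀ z ∈ U, HasFDerivAt f (Df z) z)
    (L : ℝ) (hLμ : μ ≤ L)
    (hfLip : ∀ z ∈ 𝒳, ∀ z' ∈ 𝒳, ‖Df z - Df z'‖ ≤ L * ‖z - z'‖)
    (p : X → ℝ) (hp : ∀ z, p z = f z + r z + μ * ω z)
    (hpsc : StrongConvexOn 𝒳 μ p)
    (xstar : X) (hxstar : xstar ∈ 𝒳)
    (hxstarmin : ∀ z ∈ 𝒳, p xstar ≤ p z)
    (hxstaruniq : ∀ z ∈ 𝒳, p z = p xstar → z = xstar)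
    (lam : ℝ) (hlam : 0 < lam) (hlamL : lam ≤ 1 / L)
    (xbar : X) (hxbar : xbar ∈ 𝒳)
    (e : X →L[ℝ] ℝ)
    (xplus : X) (hxplus : xplus ∈ 𝒳)
    (hxplusmin : ∀ z ∈ 𝒳,
      (Df xbar + e) xplus + r xplus + μ * ω xplus + lam⁻¹ * D xplus xbar ≤
        (Df xbar + e) z + r z + μ * ω z + lam⁻¹ * D z xbar)
    (hxplusuniq : ∀ z ∈ 𝒳,
      (Df xbar + e) z + r z + μ * ω z + lam⁻¹ * D z xbar =
        (Df xbar + e) xplus + r xplus + μ * ω xplus + lam⁻¹ * D xplus xbar → z = xplus)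
    (G : X) (hG : G = lam⁻¹ • (xbar - xplus))
    (Gbar : X →L[ℝ] ℝ) (hGbar : Gbar = lam⁻¹ • (Dω xbar - Dω xplus)) :
    p xplus - p xstar ≤ 3 * (‖Gbar‖ ^ 2 + ‖G‖ ^ 2 + ‖e‖ ^ 2) / (2 * μ) ∧
    ∀ ε > (0 : ℝ), ‖Gbar‖ ^ 2 + ‖G‖ ^ 2 + ‖e‖ ^ 2 ≤ 2 * μ * ε / 3 →
      p xplus - p xstar ≤ ε := by
  have hL : (0:ℝ) < L := lt_of_lt_of_le hμ hLμ
  set dd : X := xstar - xplus with hdd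
  set s : ℝ := ‖dd‖ with hs
  -- membership of segment points
  have hmem : ∀ t ∈ Icc (0:ℝ) 1, xplus + t • dd ∈ 𝒳 := by
    intro t ht
    have hxt : xplus + t • dd = (1 - t) • xplus + t • xstar := by rw [hdd]; module
    rw [hxt]
    exact h𝒳cv hxplus hxstar (by linarith [ht.2]) ht.1 (by ring)
  have hmem2 : ∀ t ∈ Icc (0:ℝ) 1, xbar + t • (xstar - xbar) ∈ 𝒳 := by
    intro t ht
    have hxt : xbar + t • (xstar - xbar) = (1 - t) • xbar + t • xstar := by module
    rw [hxt]
    exact h𝒳cv hxbar hxstar (by linarith [ht.2]) ht.1 (by ring)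
  have hp0 : xplus + (0:ℝ) • dd = xplus := by module
  have hb0 : xbar + (0:ℝ) • (xstar - xbar) = xbar := by module
  -- A1 : descent lemma
  have A1 : f xplus ≤ f xbar + Df xbar (xplus - xbar) + L / 2 * ‖xplus - xbar‖ ^ 2 :=
    descent_lemma hfd h𝒳cv hXU hfLip hxbar hxplus
  -- A2 : convexity of f
  have A2 : Df xbar (xstar - xbar) ≤ f xstar - f xbar := by
    have hder : HasDerivAt (fun t : ℝ => f (xbar + t • (xstar - xbar)))
        (Df xbar (xstar - xbar)) 0 :=
      line_hasDerivAt2 (by rw [hb0]; exact hfd xbar (hXU hxbar))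
    have := slope_deriv_le' (k := 0) (c := f xstar - f xbar) hder (by
      intro t ht
      have h1 := hfcv.2 hxbar hxstar (by linarith [ht.2] : (0:ℝ) ≤ 1 - t)
        ht.1.le (by ring)
      have hxt : (1 - t) • xbar + t • xstar = xbar + t • (xstar - xbar) := by module
      rw [hxt] at h1
      simp only [smul_eq_mul] at h1
      rw [hb0]
      nlinarith)
    linarith
  -- A3 : strong convexity of ω
  have A3 : Dω xplus dd ≤ ω xstar - ω xplus - 1 / 2 * s ^ 2 := by
    have hder : HasDerivAt (fun t : ℝ => ω (xplus + t • dd)) (Dω xplus dd) 0 :=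
      line_hasDerivAt2 (by rw [hp0]; exact hωd xplus (hXU hxplus))
    have hkey := slope_deriv_le' (k := 1 / 2 * s ^ 2) (c := ω xstar - ω xplus) hder (by
      intro t ht
      have h1 := hωsc.2 hxplus hxstar (by linarith [ht.2] : (0:ℝ) ≤ 1 - t)
        ht.1.le (by ring)
      have hxt : (1 - t) • xplus + t • xstar = xplus + t • dd := by rw [hdd]; module
      rw [hxt] at h1
      simp only [smul_eq_mul] at h1
      have hnn : ‖xplus - xstar‖ = s := by rw [hs, hdd, norm_sub_rev]
      rw [hnn] at h1
      rw [hp0]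
      nlinarith)
    linarith
  -- A4 : first-order optimality of xplus
  have hGbdd : Gbar dd = lam⁻¹ * (Dω xbar dd - Dω xplus dd) := by
    rw [hGbar]
    simp [ContinuousLinearMap.smul_apply, ContinuousLinearMap.sub_apply, smul_eq_mul]
  have A4 : r xplus - r xstar ≤
      (Df xbar + e) dd + μ * Dω xplus dd - Gbar dd := by
    set h : X → ℝ := fun z =>
      (Df xbar + e) z + μ * ω z + lam⁻¹ * (ω z - ω xbar - Dω xbar (z - xbar)) with hh
    have hmin : ∀ z ∈ 𝒳, h xplus + r xplus ≤ h z + r z := by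
      intro z hz
      have := hxplusmin z hz
      rw [hD z xbar, hD xplus xbar] at this
      simp only [hh]
      linarith
    -- derivative of t ↦ h (xplus + t • dd) at 0
    have hP1 : HasDerivAt (fun t : ℝ => (Df xbar + e) (xplus + t • dd))
        ((Df xbar + e) dd) 0 := line_hasDerivAt2 ((Df xbar + e).hasFDerivAt)
    have hP2 : HasDerivAt (fun t : ℝ => ω (xplus + t • dd)) (Dω xplus dd) 0 :=
      line_hasDerivAt2 (by rw [hp0]; exact hωd xplus (hXU hxplus))
    have hP3 : HasDerivAt (fun t : ℝ => Dω xbar (xplus + t • dd - xbar)) (Dω xbar dd) 0 := by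
      have := line_hasDerivAt2 (x := xplus - xbar) (d := dd) (t₀ := (0:ℝ))
        ((Dω xbar).hasFDerivAt)
      convert this using 2 with t
      congr 1
      module
    have hder : HasDerivAt (fun t : ℝ => h (xplus + t • dd))
        ((Df xbar + e) dd + μ * Dω xplus dd +
          lam⁻¹ * (Dω xplus dd - Dω xbar dd)) 0 := by
      exact (hP1.add (hP2.const_mul μ)).add
        (((hP2.sub_const (ω xbar)).sub hP3).const_mul lam⁻¹)
    have hkey := slope_deriv_ge' (c := r xplus - r xstar) hder (by
      intro t ht
      have hzt : xplus + t • dd ∈ 𝒳 := hmem t ⟨ht.1.le, ht.2⟩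
      have h1 := hmin _ hzt
      have h2 := hrcv.2 hxplus hxstar (by linarith [ht.2] : (0:ℝ) ≤ 1 - t)
        ht.1.le (by ring)
      have hxt : (1 - t) • xplus + t • xstar = xplus + t • dd := by rw [hdd]; module
      rw [hxt] at h2
      simp only [smul_eq_mul] at h2
      rw [hp0]
      nlinarith)
    have hGb2 : lam⁻¹ * (Dω xplus dd - Dω xbar dd) = - Gbar dd := by
      rw [hGbdd]; ring
    rw [hGb2] at hkey
    linarith
  -- splitting identities
  have hsplit : (Df xbar) dd = Df xbar (xstar - xbar) - Df xbar (xplus - xbar) := by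
    rw [show dd = (xstar - xbar) - (xplus - xbar) by rw [hdd]; module, map_sub]
  have hedd : e dd ≤ ‖e‖ * s := le_trans (le_abs_self _) (by
    rw [hs]; exact e.le_opNorm dd)
  have hGbdd2 : - Gbar dd ≤ ‖Gbar‖ * s := by
    have h1 : - Gbar dd ≤ |Gbar dd| := neg_le_abs _
    have h2 : |Gbar dd| ≤ ‖Gbar‖ * ‖dd‖ := Gbar.le_opNorm dd
    rw [← hs] at h2
    linarith
  -- norm of xplus - xbar
  have hnG : ‖xplus - xbar‖ = lam * ‖G‖ := by
    rw [hG, norm_smul, norm_inv, Real.norm_eq_abs, abs_of_pos hlam, norm_sub_rev]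
    field_simp
  -- key combined inequality
  have hA4' : r xplus - r xstar ≤ Df xbar (xstar - xbar) - Df xbar (xplus - xbar)
      + e dd + μ * Dω xplus dd - Gbar dd := by
    have : (Df xbar + e) dd = Df xbar dd + e dd := by
      simp [ContinuousLinearMap.add_apply]
    rw [this, hsplit] at A4
    linarith
  have hkey : p xplus - p xstar ≤ L / 2 * (lam * ‖G‖) ^ 2 + (‖e‖ + ‖Gbar‖) * s
      - μ / 2 * s ^ 2 := by
    rw [hp xplus, hp xstar]
    rw [hnG] at A1
    nlinarith [A1, A2, A3, hA4', hedd, hGbdd2, hμ]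
  have hlamL' : lam * L ≤ 1 := by
    rw [le_div_iff₀ hL] at hlamL
    linarith
  have hml1 : μ * lam ≤ 1 := by nlinarith
  have hmuLlam : μ * L * lam ^ 2 ≤ 1 := by
    nlinarith [mul_le_mul hml1 hlamL' (by positivity : (0:ℝ) ≤ lam * L)
      (by norm_num : (0:ℝ) ≤ 1)]
  have main : p xplus - p xstar ≤ 3 * (‖Gbar‖ ^ 2 + ‖G‖ ^ 2 + ‖e‖ ^ 2) / (2 * μ) := by
    rw [le_div_iff₀ (by positivity : (0:ℝ) < 2 * μ)]
    nlinarith [hkey, hμ, sq_nonneg (μ * s - (‖e‖ + ‖Gbar‖)), sq_nonneg (‖e‖ - ‖Gbar‖),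
      sq_nonneg ‖G‖, mul_nonneg (sub_nonneg.mpr hmuLlam) (sq_nonneg ‖G‖),
      sq_nonneg s, norm_nonneg G]
  refine ⟨main, ?_⟩
  intro ε hε hS
  have h1 : 3 * (‖Gbar‖ ^ 2 + ‖G‖ ^ 2 + ‖e‖ ^ 2) / (2 * μ) ≤ ε := by
    rw [div_le_iff₀ (by positivity : (0:ℝ) < 2 * μ)]
    have := hS
    rw [le_div_iff₀ (by norm_num : (0:ℝ) < 3)] at this
    linarith
  linarith
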